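/- Let N ≥ 8 be a natural number and let G be a subgroup of the symmetric group Equiv.Perm (Fin N) whose natural action on Fin N is transitive. Suppose that G contains a transposition (a swap of two distinct elements of Fin N) and that G has a subgroup that is isomorphic as an abstract group to the alternating group on r letters, for some natural number r with 2*r > N. Then G is the whole symmetric group, i.e. G = ⊤. -/

import Mathlib

open Equiv Equiv.Perm Subgroup

theorem myAltSimple (r : ℕ) (hr : 5 ≤ r) : IsSimpleGroup (alternatingGroup (Fin r)) := by
  haveI hnt : Nontrivial (Fin r) :=
    ⟨⟨⟨0, by omega⟩, ⟨1, by omega⟩, by simp [Fin.ext_iff]⟩⟩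
  have hcard : Fintype.card (Fin r) = r := Fintype.card_fin r
  -- a nontrivial element of the alternating group
  have ht₅' : IsThreeCycle ((Equiv.swap (0 : Fin 5) 2) * (Equiv.swap (0 : Fin 5) 1)) :=
    isThreeCycle_swap_mul_swap_same (by decide) (by decide) (by decide)
  haveI : Nontrivial (alternatingGroup (Fin r)) := by
    rw [← Fintype.one_lt_card_iff_nontrivial]
    have h2 := two_mul_card_alternatingGroup (α := Fin r)
    rw [Fintype.card_perm, hcard] at h2
    have h120 : 120 ≤ r.factorial := Nat.factorial_le hr
    omega
  constructor
  intro K hK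
  by_cases hbot : K = ⊥
  · exact Or.inl hbot
  refine Or.inr ?_
  -- get a nontrivial element σ of K
  rw [Subgroup.eq_bot_iff_forall] at hbot
  push_neg at hbot
  obtain ⟨σ, hσK, hσ1⟩ := hbot
  set x : Perm (Fin r) := (σ : Perm (Fin r)) with hx
  have hx1 : x ≠ 1 := fun h => hσ1 (Subtype.ext h)
  obtain ⟨a, ha⟩ : ∃ a, x a ≠ a := by
    by_contra h
    push_neg at h
    exact hx1 (Equiv.ext fun w => by simp [h w])
  set b : Fin r := x a with hb
  have hba : b ≠ a := ha
  have hxb : x b ≠ b := fun h => ha (x.injective (h.trans hb))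
  obtain ⟨d, hd⟩ : ∃ d, d ∉ ({a, b, x b} : Finset (Fin r)) := by
    by_contra h
    push_neg at h
    have h2 : (Finset.univ : Finset (Fin r)).card ≤ ({a, b, x b} : Finset (Fin r)).card :=
      Finset.card_le_card fun w _ => h w
    have h3 : ({a, b, x b} : Finset (Fin r)).card ≤ 3 :=
      (Finset.card_insert_le _ _).trans (by
        have := (Finset.card_insert_le b ({x b} : Finset (Fin r)))
        simp at this ⊢
        omega)
    rw [Finset.card_univ, hcard] at h2
    omega
  simp only [Finset.mem_insert, Finset.mem_singleton, not_or] at hd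
  obtain ⟨hda, hdb, hdxb⟩ := hd
  -- the 3-cycle c = (a b d)
  set c : Perm (Fin r) := Equiv.swap a d * Equiv.swap a b with hc
  have hc3 : IsThreeCycle c :=
    isThreeCycle_swap_mul_swap_same (Ne.symm hda) (Ne.symm hba) hdb
  have hca : c a = b := by
    simp [hc, Perm.mul_apply, Equiv.swap_apply_left,
      Equiv.swap_apply_of_ne_of_ne hba (fun h => hdb h.symm)]
  have hcb : c b = d := by
    simp [hc, Perm.mul_apply, Equiv.swap_apply_right, Equiv.swap_apply_left]
  have hcd : c d = a := by
    simp [hc, Perm.mul_apply, Equiv.swap_apply_of_ne_of_ne hda hdb, Equiv.swap_apply_right]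
  have hcfix : ∀ w, w ≠ a → w ≠ b → w ≠ d → c w = w := fun w h1 h2 h3 => by
    simp [hc, Perm.mul_apply, Equiv.swap_apply_of_ne_of_ne h1 h2,
      Equiv.swap_apply_of_ne_of_ne h1 h3]
  set γ : alternatingGroup (Fin r) := ⟨c, hc3.mem_alternatingGroup⟩ with hγ
  set ζ : alternatingGroup (Fin r) := σ * (γ * σ⁻¹ * γ⁻¹) with hζ
  have hζK : ζ ∈ K := K.mul_mem hσK (hK.conj_mem _ (K.inv_mem hσK) γ)
  set z : Perm (Fin r) := (ζ : Perm (Fin r)) with hz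
  have hzeq : z = x * (c * (x⁻¹ * c⁻¹)) := by
    simp [hz, hζ, hγ, hx, mul_assoc]
  have hz1 : z ≠ 1 := by
    intro h
    rw [hzeq] at h
    have hcomm : x * c = c * x := by
      have h2 : x * c * x⁻¹ * c⁻¹ = 1 := by rw [← h]; group
      have h3 : x * c * x⁻¹ = c := by
        rwa [mul_inv_eq_one] at h2
      exact mul_inv_eq_iff_eq_mul.mp h3
    have hb2 : (x * c) b = x d := by simp [Perm.mul_apply, hcb]
    have hb3 : (c * x) b = c (x b) := by simp [Perm.mul_apply]
    rw [hcomm, hb3] at hb2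
    by_cases hxba : x b = a
    · rw [hxba, hca] at hb2
      exact hda (x.injective (hb2.symm.trans hb))
    · rw [hcfix _ hxba hxb (fun h => hdxb h.symm)] at hb2
      exact hdb (x.injective hb2.symm)
  -- z has support inside a 5-element set
  set T : Finset (Fin r) := {a, b, d, x b, x d} with hT
  have hTcard : T.card ≤ 5 := by
    have h2 := Finset.card_insert_le (x b) ({x d} : Finset (Fin r))
    have h3 := Finset.card_insert_le d (insert (x b) {x d})
    have h4 := Finset.card_insert_le b (insert d (insert (x b) {x d}))
    have h5 := Finset.card_insert_le a (insert b (insert d (insert (x b) {x d})))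
    rw [hT]
    simp only [Finset.card_singleton] at *
    omega
  have hsupp : ∀ w, w ∉ T → z w = w := by
    intro w hw
    simp only [hT, Finset.mem_insert, Finset.mem_singleton, not_or] at hw
    obtain ⟨hwa, hwb, hwd, hwxb, hwxd⟩ := hw
    have hcw : c⁻¹ w = w := by
      rw [Perm.inv_eq_iff_eq]
      exact (hcfix w hwa hwb hwd).symm
    have hua : x⁻¹ w ≠ a := fun h => hwb (by rw [← (show x (x⁻¹ w) = w from x.apply_symm_apply w), h, ← hb])
    have hub : x⁻¹ w ≠ b := fun h => hwxb (by rw [← (show x (x⁻¹ w) = w from x.apply_symm_apply w), h])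
    have hud : x⁻¹ w ≠ d := fun h => hwxd (by rw [← (show x (x⁻¹ w) = w from x.apply_symm_apply w), h])
    rw [hzeq]
    simp only [Perm.mul_apply]
    rw [hcw, hcfix _ hua hub hud, (show x (x⁻¹ w) = w from x.apply_symm_apply w)]
  obtain ⟨S, hTS, -, hS5⟩ :=
    Finset.exists_subsuperset_card_eq (Finset.subset_univ T) hTcard
      (by rw [Finset.card_univ, hcard]; exact hr)
  set f : Fin 5 ≃ {w : Fin r // w ∈ S} :=
    (Fintype.equivFinOfCardEq (by rw [Fintype.card_coe, hS5])).symm with hf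
  have hmove : ∀ w, z w ≠ w → w ∈ T ∧ z w ∈ T := by
    intro w h
    constructor
    · by_contra h'; exact h (hsupp w h')
    · by_contra h'; exact h (z.injective (hsupp _ h'))
  have hzS : ∀ w, w ∈ S ↔ z w ∈ S := by
    intro w
    by_cases hzw : z w = w
    · rw [hzw]
    · exact ⟨fun _ => hTS (hmove w hzw).2, fun _ => hTS (hmove w hzw).1⟩
  set z' : Perm (Fin 5) := Equiv.permCongr f.symm (z.subtypePerm (fun w => (hzS w).symm)) with hz'
  have hz'ext : z'.extendDomain f = z := by
    refine Equiv.ext fun w => ?_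
    by_cases hw : w ∈ S
    · rw [Perm.extendDomain_apply_subtype _ f hw]
      simp [hz', Equiv.permCongr_apply, Equiv.Perm.subtypePerm_apply]
    · rw [Perm.extendDomain_apply_not_subtype _ f hw]
      exact (hsupp w fun hT' => hw (hTS hT')).symm
  have hz'1 : z' ≠ 1 := fun h => hz1 (by rw [← hz'ext, h, Perm.extendDomain_one])
  have hz'A : z' ∈ alternatingGroup (Fin 5) := by
    rw [mem_alternatingGroup, ← sign_extendDomain z' f, hz'ext]
    exact mem_alternatingGroup.mp ζ.2
  set Ψ : alternatingGroup (Fin 5) →* alternatingGroup (Fin r) :=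
    { toFun := fun τ => ⟨(τ : Perm (Fin 5)).extendDomain f, by
        rw [mem_alternatingGroup, sign_extendDomain]
        exact mem_alternatingGroup.mp τ.2⟩
      map_one' := Subtype.ext (by simp [Perm.extendDomain_one])
      map_mul' := fun τ₁ τ₂ => Subtype.ext (by simp [← Perm.extendDomain_mul]) } with hΨ
  set K₅ : Subgroup (alternatingGroup (Fin 5)) := K.comap Ψ with hK₅
  have hz''K : (⟨z', hz'A⟩ : alternatingGroup (Fin 5)) ∈ K₅ := by
    show Ψ ⟨z', hz'A⟩ ∈ K
    have heq : Ψ ⟨z', hz'A⟩ = ζ := Subtype.ext (by rw [hΨ]; simpa [hz] using hz'ext)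
    rw [heq]; exact hζK
  have hK₅cases : K₅ = ⊥ ∨ K₅ = ⊤ :=
    IsSimpleGroup.eq_bot_or_eq_top_of_normal K₅ (hK.comap Ψ)
  have hK₅top : K₅ = ⊤ := by
    rcases hK₅cases with h | h
    · rw [h, Subgroup.mem_bot] at hz''K
      exact absurd (congrArg Subtype.val hz''K) hz'1
    · exact h
  set t₅ : Perm (Fin 5) := Equiv.swap 0 2 * Equiv.swap 0 1 with ht₅def
  set t : Perm (Fin r) := t₅.extendDomain f with htdef
  have ht3 : t.IsThreeCycle := by
    unfold Equiv.Perm.IsThreeCycle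
    rw [htdef, cycleType_extendDomain]
    exact ht₅'
  have htK : (⟨t, ht3.mem_alternatingGroup⟩ : alternatingGroup (Fin r)) ∈ K := by
    have h1 : (⟨t₅, ht₅'.mem_alternatingGroup⟩ : alternatingGroup (Fin 5)) ∈ K₅ := by
      rw [hK₅top]; exact Subgroup.mem_top _
    have h2 : Ψ ⟨t₅, ht₅'.mem_alternatingGroup⟩ ∈ K := h1
    have heq : Ψ ⟨t₅, ht₅'.mem_alternatingGroup⟩
        = (⟨t, ht3.mem_alternatingGroup⟩ : alternatingGroup (Fin r)) := Subtype.ext rfl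
    rwa [heq] at h2
  haveI := hK
  rw [eq_top_iff, ← ht3.alternating_normalClosure (by rw [Nat.card_eq_fintype_card, hcard]; exact hr)]
  exact normalClosure_le_normal (Set.singleton_subset_iff.mpr htK)

theorem hom_small_trivial {H : Type*} [Group H] {r : ℕ} (hr : 5 ≤ r)
    (e : H ≃* alternatingGroup (Fin r)) {β : Type*} [Fintype β]
    (hβ : Fintype.card β < r) (f : H →* Equiv.Perm β) : ∀ h, f h = 1 := by
  haveI : Nontrivial (Fin r) :=
    ⟨⟨⟨0, by omega⟩, ⟨1, by omega⟩, by simp [Fin.ext_iff]⟩⟩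
  haveI : DecidableEq β := Classical.decEq β
  haveI hs : IsSimpleGroup (alternatingGroup (Fin r)) := myAltSimple r hr
  haveI : Nontrivial H := e.toEquiv.nontrivial
  haveI : IsSimpleGroup H :=
    IsSimpleGroup.isSimpleGroup_of_surjective e.symm.toMonoidHom e.symm.surjective
  rcases IsSimpleGroup.eq_bot_or_eq_top_of_normal f.ker f.normal_ker with hk | hk
  · exfalso
    have hinj : Function.Injective f := (MonoidHom.ker_eq_bot_iff f).mp hk
    haveI : Fintype H := Fintype.ofEquiv _ e.toEquiv.symm
    have hc1 : Fintype.card H = Fintype.card (alternatingGroup (Fin r)) :=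
      Fintype.card_congr e.toEquiv
    have hc2 := two_mul_card_alternatingGroup (α := Fin r)
    rw [Fintype.card_perm, Fintype.card_fin] at hc2
    have hle : Fintype.card H ≤ Fintype.card (Equiv.Perm β) :=
      Fintype.card_le_of_injective f hinj
    rw [Fintype.card_perm] at hle
    have hfac : Nat.factorial (Fintype.card β) ≤ Nat.factorial (r - 1) := Nat.factorial_le (by omega)
    have hrfac : r.factorial = r * Nat.factorial (r - 1) := by
      cases r with
      | zero => omega
      | succ n => simp [Nat.factorial_succ]
    have hpos := Nat.factorial_pos (r - 1)
    have h1 : r * Nat.factorial (r - 1) ≤ 2 * Nat.factorial (r - 1) := by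
      calc r * Nat.factorial (r - 1) = r.factorial := hrfac.symm
        _ = 2 * Fintype.card H := by rw [hc1, hc2]
        _ ≤ 2 * Nat.factorial (Fintype.card β) := by omega
        _ ≤ 2 * Nat.factorial (r - 1) := by omega
    have h2 : r ≤ 2 := Nat.le_of_mul_le_mul_right h1 hpos
    omega
  · intro h
    have : h ∈ f.ker := hk ▸ Subgroup.mem_top h
    exact this


/-- If `N ≥ 8`, `G ≤ Perm (Fin N)` is transitive, contains a transposition,
and contains (a subgroup isomorphic to) the alternating group on `r` letters with
`2 * r > N`, then `G = ⊤`. -/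
theorem stmt_0 (N : ℕ) (hN : 8 ≤ N) (G : Subgroup (Equiv.Perm (Fin N)))
    (htrans : ∀ x y : Fin N, ∃ g ∈ G, g x = y)
    (htransp : ∃ g ∈ G, Equiv.Perm.IsSwap g)
    (r : ℕ) (hr : 2 * r > N)
    (hA : ∃ H : Subgroup G, Nonempty (H ≃* alternatingGroup (Fin r))) :
    G = ⊤ := by
  classical
  obtain ⟨H, ⟨e⟩⟩ := hA
  have hr5 : 5 ≤ r := by omega
  by_cases hall : ∀ x y : Fin N, x ≠ y → Equiv.swap x y ∈ G
  · rw [eq_top_iff, ← Equiv.Perm.closure_isSwap, Subgroup.closure_le]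
    rintro σ ⟨u, v, huv, rfl⟩
    exact hall u v huv
  push_neg at hall
  obtain ⟨x₀, y₀, hxy₀, hswap₀⟩ := hall
  exfalso
  -- the relation "swap x y ∈ G"
  set R : Fin N → Fin N → Prop := fun x y => x = y ∨ Equiv.swap x y ∈ G with hRdef
  have hrefl : ∀ x, R x x := fun x => Or.inl rfl
  have hsymm : ∀ {x y}, R x y → R y x := by
    rintro x y (rfl | h)
    · exact Or.inl rfl
    · exact Or.inr (by rwa [Equiv.swap_comm])
  have hconj : ∀ g ∈ G, ∀ x y, R x y → R (g x) (g y) := by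
    rintro g hg x y (rfl | h)
    · exact Or.inl rfl
    · refine Or.inr ?_
      rw [Equiv.swap_apply_apply]
      exact G.mul_mem (G.mul_mem hg h) (G.inv_mem hg)
  have htrans' : ∀ {x y z}, R x y → R y z → R x z := by
    rintro x y z (rfl | hxy) h
    · exact h
    rcases h with rfl | hyz
    · exact Or.inr hxy
    by_cases hxz : x = z
    · exact Or.inl hxz
    by_cases hyz' : y = z
    · subst hyz'; exact Or.inr hxy
    refine Or.inr ?_
    have hy : (Equiv.swap x y) y = x := Equiv.swap_apply_right x y
    have hz : (Equiv.swap x y) z = z :=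
      Equiv.swap_apply_of_ne_of_ne (Ne.symm hxz) (Ne.symm hyz')
    have h2 := Equiv.swap_apply_apply (Equiv.swap x y) y z
    rw [hy, hz] at h2
    rw [h2]
    exact G.mul_mem (G.mul_mem hxy hyz) (G.inv_mem hxy)
  have hiff : ∀ g ∈ G, ∀ x y, R x y ↔ R (g x) (g y) := by
    intro g hg x y
    constructor
    · exact hconj g hg x y
    · intro h2
      have h3 := hconj g⁻¹ (G.inv_mem hg) _ _ h2
      simpa using h3
  letI std : Setoid (Fin N) := ⟨R, ⟨hrefl, hsymm, htrans'⟩⟩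
  have hRxy : ¬ R x₀ y₀ := by rintro (h | h); exacts [hxy₀ h, hswap₀ h]
  -- equivalence classes as finsets
  set Cl : Fin N → Finset (Fin N) := fun x => Finset.univ.filter (fun y => R y x) with hCl
  have hclcard : ∀ x y : Fin N, (Cl x).card = (Cl y).card := by
    intro x y
    obtain ⟨g, hg, hgx⟩ := htrans x y
    have himg : (Cl x).image g = Cl y := by
      ext w
      simp only [hCl, Finset.mem_image, Finset.mem_filter, Finset.mem_univ, true_and]
      constructor
      · rintro ⟨z, hz, rfl⟩
        exact hgx ▸ hconj g hg z x hz
      · intro hw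
        refine ⟨g⁻¹ w, ?_, g.apply_symm_apply w⟩
        have h4 := hconj g⁻¹ (G.inv_mem hg) w (g x) (hgx ▸ hw)
        simpa using h4
    rw [← himg, Finset.card_image_of_injective _ g.injective]
  set b : ℕ := (Cl x₀).card with hbdef
  have hb2 : 2 ≤ b := by
    obtain ⟨g, hgG, u, v, huv, rfl⟩ := htransp
    have hsub : ({u, v} : Finset (Fin N)) ⊆ Cl u := by
      intro w hw
      simp only [Finset.mem_insert, Finset.mem_singleton] at hw
      simp only [hCl, Finset.mem_filter, Finset.mem_univ, true_and]
      rcases hw with rfl | rfl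
      · exact hrefl w
      · exact Or.inr (by rwa [Equiv.swap_comm])
    have hcard2 : ({u, v} : Finset (Fin N)).card = 2 := Finset.card_pair huv
    calc 2 = ({u, v} : Finset (Fin N)).card := hcard2.symm
      _ ≤ (Cl u).card := Finset.card_le_card hsub
      _ = b := hclcard u x₀
  have hdisj : Disjoint (Cl x₀) (Cl y₀) := by
    rw [Finset.disjoint_left]
    intro w hw hw'
    simp only [hCl, Finset.mem_filter, Finset.mem_univ, true_and] at hw hw'
    exact hRxy (htrans' (hsymm hw) hw')
  have h2bN : 2 * b ≤ N := by
    have hc := Finset.card_union_of_disjoint hdisj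
    have hle : (Cl x₀ ∪ Cl y₀).card ≤ N := by
      refine le_trans (Finset.card_le_card (Finset.subset_univ _)) ?_
      rw [Finset.card_univ, Fintype.card_fin]
    rw [hc, ← hbdef, hclcard y₀ x₀, ← hbdef] at hle
    omega
  set m : ℕ := Fintype.card (Quotient std) with hmdef
  have hfib : ∀ q : Quotient std,
      (Finset.univ.filter fun x : Fin N => (⟦x⟧ : Quotient std) = q).card = b := by
    intro q
    induction q using Quotient.ind with
    | _ y =>
      have hset : (Finset.univ.filter fun x : Fin N => (⟦x⟧ : Quotient std) = ⟦y⟧) = Cl y := by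
        ext w
        simp only [hCl, Finset.mem_filter, Finset.mem_univ, true_and]
        constructor
        · intro h; exact Quotient.exact h
        · intro h; exact Quotient.sound h
      rw [hset]
      exact hclcard y x₀
  have hNmb : N = m * b := by
    have hsum := Finset.card_eq_sum_card_fiberwise
      (f := fun x : Fin N => (⟦x⟧ : Quotient std)) (s := Finset.univ) (t := Finset.univ)
      (fun x _ => Finset.mem_univ _)
    rw [Finset.card_univ, Fintype.card_fin] at hsum
    rw [hsum, Finset.sum_congr rfl (fun q _ => hfib q), Finset.sum_const, Finset.card_univ,
      smul_eq_mul]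
  have hm2 : 2 ≤ m := by
    rw [hmdef]
    rw [show (2 : ℕ) = 1 + 1 from rfl, ← Nat.lt_iff_add_one_le]
    rw [Fintype.one_lt_card_iff]
    exact ⟨⟦x₀⟧, ⟦y₀⟧, fun h => hRxy (Quotient.exact h)⟩
  have hbr : b < r := by
    have := Nat.mul_le_mul_right b hm2
    omega
  have hmr : m < r := by
    have h1 : m * 2 ≤ m * b := Nat.mul_le_mul_left m hb2
    omega
  -- the action of H on the set of classes
  set φ : H →* Equiv.Perm (Quotient std) :=
    { toFun := fun h => Quotient.congr (((h : G) : Equiv.Perm (Fin N)) : Fin N ≃ Fin N)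
        (hiff _ (h : G).2)
      map_one' := by
        refine Equiv.ext fun q => ?_
        induction q using Quotient.ind with
        | _ x => simp
      map_mul' := fun h₁ h₂ => by
        refine Equiv.ext fun q => ?_
        induction q using Quotient.ind with
        | _ x => simp } with hφdef
  have hφ := hom_small_trivial hr5 e (β := Quotient std) hmr φ
  have hfix : ∀ (h : H) (x : Fin N), R (((h : G) : Equiv.Perm (Fin N)) x) x := by
    intro h x
    have h1 : φ h ⟦x⟧ = ⟦x⟧ := by rw [hφ h]; rfl
    exact Quotient.exact h1
  -- a nontrivial element of H
  haveI : Nontrivial (Fin r) :=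
    ⟨⟨⟨0, by omega⟩, ⟨1, by omega⟩, by simp [Fin.ext_iff]⟩⟩
  haveI := myAltSimple r hr5
  haveI : Nontrivial H := e.toEquiv.nontrivial
  obtain ⟨h₀, hh₀⟩ := exists_ne (1 : H)
  obtain ⟨x, hx⟩ : ∃ x, ((h₀ : G) : Equiv.Perm (Fin N)) x ≠ x := by
    by_contra hcon
    push_neg at hcon
    apply hh₀
    have hperm : ((h₀ : G) : Equiv.Perm (Fin N)) = 1 := Equiv.ext fun w => by simp [hcon w]
    exact Subtype.ext (Subtype.ext (by simpa using hperm))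
  -- H acts on the class of x
  have hiff2 : ∀ (h : H) (w : Fin N), R w x ↔ R (((h : G) : Equiv.Perm (Fin N)) w) x := by
    intro h w
    constructor
    · intro hw; exact htrans' (hfix h w) hw
    · intro hw; exact htrans' (hsymm (hfix h w)) hw
  set ρ : H →* Equiv.Perm {w : Fin N // R w x} :=
    { toFun := fun h => Equiv.Perm.subtypePerm ((h : G) : Equiv.Perm (Fin N)) (fun w => (hiff2 h w).symm)
      map_one' := by
        refine Equiv.ext fun w => Subtype.ext ?_
        simp [Equiv.Perm.subtypePerm_apply]
      map_mul' := fun h₁ h₂ => by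
        refine Equiv.ext fun w => Subtype.ext ?_
        simp [Equiv.Perm.subtypePerm_apply]; rfl } with hρdef
  have hcardsub : Fintype.card {w : Fin N // R w x} < r := by
    rw [Fintype.card_subtype]
    calc (Finset.univ.filter fun w : Fin N => R w x).card = (Cl x).card := rfl
      _ = b := hclcard x x₀
      _ < r := hbr
  have hρ := hom_small_trivial hr5 e hcardsub ρ
  have hfinal := congrArg (fun π : Equiv.Perm {w : Fin N // R w x} => (π ⟨x, hrefl x⟩ : {w : Fin N // R w x})) (hρ h₀)
  simp only [Equiv.Perm.one_apply] at hfinal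
  rw [hρdef] at hfinal
  apply hx
  exact congrArg Subtype.val hfinal
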